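/- Let G be a semi-Markovian DAG satisfying Assumption 1. Let x_t ∈ X^(o) be a node with a directed edge x_t → t. Let G_e be the sub-sampled graph built from x_t and an arbitrary subset V_0 ⊆ {t}, and let Z ⊆ X^(o) \ {x_t}. Then Z satisfies the back-door criterion relative to (t, y) in G if and only if e and y are d-separated by Z ∪ {t} in G_e. -/

import Mathlib

namespace CausalDAG

variable {V : Type*}

/-- Adjacency: an edge between `u` and `v` in either direction. -/
def Adj (E : V → V → Prop) (u v : V) : Prop := E u v ∨ E v u

/-- `d` is a descendant of `v`: there is a directed path from `v` to `d`. -/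
def Descendant (E : V → V → Prop) (v d : V) : Prop := Relation.TransGen E v d

/-- The directed graph with edge relation `E` is acyclic. -/
def Acyclic (E : V → V → Prop) : Prop := ∀ v, ¬ Relation.TransGen E v v

/-- A path between `a` and `b` in the graph with edge relation `E`:
a sequence of at least two distinct nodes, starting at `a`, ending at `b`,
with consecutive nodes joined by an edge (in either direction). -/
structure GPath (E : V → V → Prop) (a b : V) where
  nodes : List V
  nodup : nodes.Nodup
  two_le : 2 ≤ nodes.length
  head_eq : nodes.head? = some a
  last_eq : nodes.getLast? = some b
  chain : nodes.Chain' (Adj E)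

namespace GPath

variable {E : V → V → Prop} {a b : V}

/-- `i` is an interior position of the path. -/
def Interior (p : GPath E a b) (i : ℕ) : Prop := 0 < i ∧ i + 1 < p.nodes.length

/-- The node at interior position `i` is a collider on the path: both adjacent
edges of the path point into it. -/
def ColliderAt (p : GPath E a b) (i : ℕ) : Prop :=
  ∃ x v z, p.nodes[i - 1]? = some x ∧ p.nodes[i]? = some v ∧
    p.nodes[i + 1]? = some z ∧ E x v ∧ E z v

/-- The path is blocked by the set `S`. -/
def BlockedBy (p : GPath E a b) (S : Set V) : Prop :=
  ∃ i v, p.Interior i ∧ p.nodes[i]? = some v ∧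
    ((¬ p.ColliderAt i ∧ v ∈ S) ∨
      (p.ColliderAt i ∧ v ∉ S ∧ ∀ d, Descendant E v d → d ∉ S))

/-- The path contains the directed edge `u → v` as one of its steps. -/
def UsesEdge (p : GPath E a b) (u v : V) : Prop :=
  E u v ∧ ∃ i, (p.nodes[i]? = some u ∧ p.nodes[i + 1]? = some v) ∨
    (p.nodes[i]? = some v ∧ p.nodes[i + 1]? = some u)

/-- The path contains an edge pointing into its first endpoint. -/
def IntoFirst (p : GPath E a b) : Prop :=
  ∃ w, p.nodes[1]? = some w ∧ E w a

end GPath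

/-- `a` and `b` are d-separated by `S`: every path between them is blocked by `S`. -/
def DSep (E : V → V → Prop) (a b : V) (S : Set V) : Prop :=
  ∀ p : GPath E a b, p.BlockedBy S

/-- `Z` satisfies the back-door criterion relative to `(t, y)`: no node of `Z` is a
descendant of `t`, and `Z` blocks every path between `t` and `y` containing an edge
pointing into `t`. -/
def BackDoor (E : V → V → Prop) (t y : V) (Z : Set V) : Prop :=
  (∀ z ∈ Z, ¬ Descendant E t z) ∧
  ∀ p : GPath E t y, p.IntoFirst → p.BlockedBy Z

/-- A semi-Markovian DAG: observed features `Xo`, unobserved features `Xu`,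
treatment `t`, outcome `y`; unobserved nodes have no parents and at most two
children. -/
structure SemiMarkov (V : Type*) where
  E : V → V → Prop
  Xo : Set V
  Xu : Set V
  t : V
  y : V
  acyclic : Acyclic E
  t_ne_y : t ≠ y
  t_notin : t ∉ Xo ∪ Xu
  y_notin : y ∉ Xo ∪ Xu
  disjoint : Disjoint Xo Xu
  cover : ∀ v, v ∈ Xo ∨ v ∈ Xu ∨ v = t ∨ v = y
  unobs_no_parents : ∀ u ∈ Xu, ∀ w, ¬ E w u
  unobs_children : ∀ u ∈ Xu, ∃ a b, ∀ c, E u c → c = a ∨ c = b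

/-- Assumption 1: `y` is the only child of `t`, and `y` has no children. -/
def Assumption1 (M : SemiMarkov V) : Prop :=
  M.E M.t M.y ∧ (∀ w, M.E M.t w → w = M.y) ∧ ∀ w, ¬ M.E M.y w

/-- Edge relation of the sub-sampled graph `G_e`: a new node `e` (represented by
`none`) is added, together with the edge `x_t → e` and an edge `v → e` for each
`v ∈ V0`. -/
def subEdge (E : V → V → Prop) (xt : V) (V0 : Set V) :
    Option V → Option V → Prop
  | some u, some v => E u v
  | some u, none => u = xt ∨ u ∈ V0
  | none, _ => False

end CausalDAG

def List.get? {α : Type*} (l : List α) (n : ℕ) : Option α := l[n]?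

namespace List

variable {α β : Type*}

theorem get?_eq_some {l : List α} {n : ℕ} {a : α} :
    l.get? n = some a ↔ ∃ h : n < l.length, l[n] = a := List.getElem?_eq_some_iff

theorem get?_zero (l : List α) : l.get? 0 = l.head? := List.head?_eq_getElem?.symm

theorem get?_mem {l : List α} {n : ℕ} {a : α} (h : l.get? n = some a) : a ∈ l :=
  List.mem_of_getElem? h

theorem get?_drop (L : List α) (i j : ℕ) : (L.drop i).get? j = L.get? (i + j) :=
  List.getElem?_drop

theorem get?_map (f : α → β) (l : List α) (n : ℕ) : (l.map f).get? n = (l.get? n).map f :=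
  List.getElem?_map

theorem get?_append {l₁ l₂ : List α} {n : ℕ} (h : n < l₁.length) :
    (l₁ ++ l₂).get? n = l₁.get? n := List.getElem?_append_left h

theorem get?_append_right {l₁ l₂ : List α} {n : ℕ} (h : l₁.length ≤ n) :
    (l₁ ++ l₂).get? n = l₂.get? (n - l₁.length) := List.getElem?_append_right h

theorem get?_reverse {l : List α} {i : ℕ} (h : i < l.length) :
    l.reverse.get? i = l.get? (l.length - 1 - i) := List.getElem?_reverse h

theorem get?_cons_succ {a : α} {l : List α} {n : ℕ} : (a :: l).get? (n + 1) = l.get? n := rfl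

theorem get?_inj {xs : List α} {i j : ℕ} (h₀ : i < xs.length) (h₁ : xs.Nodup)
    (h₂ : xs.get? i = xs.get? j) : i = j := (List.getElem?_inj h₀ h₁).mp h₂

theorem mem_iff_get? {a : α} {l : List α} : a ∈ l ↔ ∃ n, l.get? n = some a :=
  List.mem_iff_getElem?

theorem getLast?_eq_get? (l : List α) : l.getLast? = l.get? (l.length - 1) :=
  List.getLast?_eq_getElem?

end List


namespace CausalDAG

variable {V : Type*}

variable {E : V → V → Prop}

lemma chain'_get? {R : V → V → Prop} {l : List V} (h : l.Chain' R) {i : ℕ} {x y : V}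
    (ha : l.get? i = some x) (hb : l.get? (i+1) = some y) : R x y := by
  rw [List.get?_eq_some] at ha hb
  obtain ⟨hi, rfl⟩ := ha; obtain ⟨hj, rfl⟩ := hb
  exact List.isChain_iff_getElem.mp h i (by omega)

lemma mem_chain_transGen {a v : V} {l : List V} (h : List.Chain E a l) (hv : v ∈ l) :
    Relation.TransGen E a v := by
  induction l generalizing a with
  | nil => cases hv
  | cons x xs ih =>
    obtain ⟨hax, hxs⟩ := List.isChain_cons_cons.mp h
    rcases List.mem_cons.mp hv with rfl | hv'
    · exact .single hax
    · exact Relation.TransGen.head hax (ih hxs hv')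

lemma chain_nodup (hAc : Acyclic E) {a : V} {l : List V} (h : List.Chain E a l) :
    (a :: l).Nodup := by
  induction l generalizing a with
  | nil => simp
  | cons x xs ih =>
    obtain ⟨hax, hxs⟩ := List.isChain_cons_cons.mp h
    refine List.nodup_cons.mpr ⟨fun hm => hAc a ?_, ih hxs⟩
    exact mem_chain_transGen (List.Chain.cons hax hxs) hm

lemma transGen_exists_chain {v w : V} (h : Relation.TransGen E v w) :
    ∃ l : List V, l ≠ [] ∧ List.Chain E v l ∧ l.getLast? = some w := by
  induction h with
  | single h => exact ⟨[_], by simp, List.Chain.cons h List.Chain.nil, rfl⟩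
  | @tail b c _ h ih =>
    obtain ⟨l, hne, hch, hl⟩ := ih
    refine ⟨l ++ [c], by simp, ?_, List.getLast?_concat⟩
    have : List.Chain' E ((v :: l) ++ [c]) := by
      rw [List.Chain', List.isChain_append]
      refine ⟨hch, List.isChain_singleton _, ?_⟩
      intro x hx y hy
      simp at hy; subst hy
      have hgl : (v :: l).getLast? = some b := by
        cases l with
        | nil => simp at hne
        | cons c' cs => rw [List.getLast?_cons_cons]; exact hl
      rw [hgl] at hx; simp at hx; subst hx; exact h
    exact this

lemma desc_lift {xt : V} {V0 : Set V} {v d : V} (h : Relation.TransGen E v d) :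
    Relation.TransGen (subEdge E xt V0) (some v) (some d) := by
  induction h with
  | single h => exact .single h
  | tail _ h ih => exact ih.tail h

lemma desc_proj {xt : V} {V0 : Set V} {v d : V}
    (h : Relation.TransGen (subEdge E xt V0) (some v) (some d)) :
    Relation.TransGen E v d := by
  have key : ∀ w, Relation.TransGen (subEdge E xt V0) (some v) w →
      ∀ d, w = some d → Relation.TransGen E v d := by
    intro w h
    induction h with
    | single h => intro d hd; subst hd; exact .single h
    | @tail b c hab hbc ih =>
      intro d hd; subst hd
      cases b with
      | none => exact absurd hbc (by simp [subEdge])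
      | some b' => exact (ih b' rfl).tail hbc
  exact key _ h d rfl

lemma exists_map_some {xs : List (Option V)} (h : (none : Option V) ∉ xs) :
    ∃ l : List V, xs = l.map some := by
  induction xs with
  | nil => exact ⟨[], rfl⟩
  | cons a tl ih =>
    cases a with
    | none => simp at h
    | some v =>
      obtain ⟨l, hl⟩ := ih (fun hm => h (List.mem_cons_of_mem _ hm))
      exact ⟨v :: l, by simp [hl]⟩

lemma getLast?_map' {W : Type*} (f : V → W) (l : List V) :
    (l.map f).getLast? = (l.getLast?).map f := by
  rw [List.getLast?_eq_get?, List.getLast?_eq_get?, List.get?_map, List.length_map]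

lemma getLast?_cons_ne {a : V} {l : List V} (h : l ≠ []) :
    (a :: l).getLast? = l.getLast? := by
  obtain ⟨b, l', rfl⟩ := List.exists_cons_of_ne_nil h
  exact List.getLast?_cons_cons

def ColL (E : V → V → Prop) (l : List V) (i : ℕ) : Prop :=
  ∃ x v z, l.get? (i - 1) = some x ∧ l.get? i = some v ∧
    l.get? (i + 1) = some z ∧ E x v ∧ E z v

lemma colL_iff_of_eq {l l' : List V} {i i' : ℕ}
    (h1 : l.get? (i-1) = l'.get? (i'-1)) (h2 : l.get? i = l'.get? i')
    (h3 : l.get? (i+1) = l'.get? (i'+1)) :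
    ColL E l i ↔ ColL E l' i' := by
  unfold ColL; rw [h1, h2, h3]

lemma colL_subEdge_iff {xt : V} {V0 : Set V} {lo : List (Option V)} {l : List V} {io i : ℕ}
    (h1 : lo.get? (io - 1) = (l.get? (i-1)).map some)
    (h2 : lo.get? io = (l.get? i).map some)
    (h3 : lo.get? (io + 1) = (l.get? (i+1)).map some) :
    ColL (subEdge E xt V0) lo io ↔ ColL E l i := by
  constructor
  · rintro ⟨x, v, z, e1, e2, e3, hx, hz⟩
    rw [h1, Option.map_eq_some_iff] at e1
    rw [h2, Option.map_eq_some_iff] at e2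
    rw [h3, Option.map_eq_some_iff] at e3
    obtain ⟨x', ex, rfl⟩ := e1
    obtain ⟨v', ev, rfl⟩ := e2
    obtain ⟨z', ez, rfl⟩ := e3
    exact ⟨x', v', z', ex, ev, ez, hx, hz⟩
  · rintro ⟨x, v, z, e1, e2, e3, hx, hz⟩
    exact ⟨some x, some v, some z, by rw [h1, e1]; rfl, by rw [h2, e2]; rfl,
      by rw [h3, e3]; rfl, hx, hz⟩


end CausalDAG


namespace CausalDAG

variable {V : Type*} {E : V → V → Prop}

def GoodP (E : V → V → Prop) (t : V) (Z : Set V) (l : List V) : Prop :=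
  ∀ i v, 0 < i → i + 1 < l.length → l.get? i = some v →
    (¬ ColL E l i → v ∉ Z) ∧
    (ColL E l i → v ∈ Z ∨ ∃ d, Relation.TransGen E v d ∧ (d ∈ Z ∨ d = t))

def BadP (E : V → V → Prop) (Z : Set V) (l : List V) (i : ℕ) : Prop :=
  ∃ v, l.get? i = some v ∧ 0 < i ∧ i + 1 < l.length ∧ ColL E l i ∧ v ∉ Z ∧
    ∀ d, Relation.TransGen E v d → d ∉ Z

lemma colliderAt_iff_colL {a b : V} (p : GPath E a b) (i : ℕ) :
    p.ColliderAt i ↔ ColL E p.nodes i := Iff.rfl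

lemma unblocked_of_good_nobad {a b : V} (p : GPath E a b) (hG : GoodP E a Z p.nodes)
    (hnb : ∀ i, ¬ BadP E Z p.nodes i) : ¬ p.BlockedBy Z := by
  rintro ⟨i, v, ⟨hi0, hi1⟩, hget, hcase⟩
  rcases hcase with ⟨hnc, hvZ⟩ | ⟨hc, hvZ, hd⟩
  · exact (hG i v hi0 hi1 hget).1 hnc hvZ
  · exact hnb i ⟨v, hget, hi0, hi1, hc, hvZ, hd⟩

lemma lemmaA (hAc : Acyclic E) {t y : V} {Z : Set V} (p : GPath E t y)
    (hIF : p.IntoFirst) (hG : GoodP E t Z p.nodes) :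
    ∃ p' : GPath E t y, p'.IntoFirst ∧ ¬ p'.BlockedBy Z := by
  have key : ∀ n (p : GPath E t y), p.IntoFirst → GoodP E t Z p.nodes →
      (∀ i, BadP E Z p.nodes i → p.nodes.length ≤ i + n) →
      ∃ p' : GPath E t y, p'.IntoFirst ∧ ¬ p'.BlockedBy Z := by
    intro n
    induction n with
    | zero =>
      intro p hIF hG hB
      refine ⟨p, hIF, unblocked_of_good_nobad p hG ?_⟩
      rintro i ⟨v, hget, hi0, hi1, hc, hvZ, hd⟩
      have := hB i ⟨v, hget, hi0, hi1, hc, hvZ, hd⟩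
      omega
    | succ n ih =>
      intro p hIF hG hB
      by_cases hbad : ∃ i, BadP E Z p.nodes i
      case neg =>
        push_neg at hbad
        exact ⟨p, hIF, unblocked_of_good_nobad p hG hbad⟩
      case pos =>
      obtain ⟨i0, v0, hv0get, hi00, hi01, hcol, hv0Z, hv0desc⟩ := hbad
      classical
      -- directed path from v0 to t
      have hvt : Relation.TransGen E v0 t := by
        rcases (hG i0 v0 hi00 hi01 hv0get).2 hcol with hvZ | ⟨d, hd, hdZ | rfl⟩
        · exact absurd hvZ hv0Z
        · exact absurd hdZ (hv0desc d hd)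
        · exact hd
      obtain ⟨cl, hclne, hclch, hcllast⟩ := transGen_exists_chain hvt
      have hwnd : (v0 :: cl).Nodup := chain_nodup hAc hclch
      have hwch : (v0 :: cl).Chain' E := hclch
      have hwne : (v0 :: cl) ≠ [] := by simp
      have hwlast : (v0 :: cl).getLast? = some t := by
        cases cl with
        | nil => simp at hclne
        | cons c cs => rw [List.getLast?_cons_cons]; exact hcllast
      have hweq : (v0 :: cl).dropLast ++ [t] = v0 :: cl := by
        have h := List.getLast?_eq_getLast hwne
        rw [h] at hwlast
        have h2 : (v0 :: cl).getLast hwne = t := Option.some.inj hwlast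
        rw [← h2]; exact List.dropLast_append_getLast hwne
      set cc := (v0 :: cl).dropLast with hccdef
      have hcclen : cc.length = cl.length := by
        have := congrArg List.length hweq
        simp at this; omega
      have hcclen0 : 0 < cc.length := by
        rw [hcclen]; exact List.length_pos_iff.mpr hclne
      have hccne : cc ≠ [] := List.ne_nil_of_length_pos hcclen0
      have hccnd : cc.Nodup := List.Nodup.sublist (List.dropLast_sublist _) hwnd
      have htcc : t ∉ cc := by
        intro h
        have hnd := hwnd
        rw [← hweq, List.nodup_append] at hnd
        exact hnd.2.2 t h t (by simp) rfl
      have hccsplit : (cc ++ [t]).Chain' E := by rw [hweq]; exact hwch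
      rw [List.Chain', List.isChain_append] at hccsplit
      obtain ⟨hccchain, -, hcclastE⟩ := hccsplit
      have hcclastE' : ∀ x ∈ cc.getLast?, E x t := fun x hx => hcclastE x hx t (by simp)
      have hcc0 : cc.get? 0 = some v0 := by
        have h0 : ((cc ++ [t]).get? 0) = some v0 := by rw [hweq]; rfl
        rwa [List.get?_append hcclen0] at h0
      have hccmem : ∀ x ∈ cc, x = v0 ∨ Relation.TransGen E v0 x := by
        intro x hx
        have hx' : x ∈ v0 :: cl := (List.dropLast_sublist _).subset hx
        rcases List.mem_cons.mp hx' with rfl | h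
        · exact Or.inl rfl
        · exact Or.inr (mem_chain_transGen hclch h)
      have hccZ : ∀ x ∈ cc, x ∉ Z := by
        intro x hx
        rcases hccmem x hx with rfl | h
        · exact hv0Z
        · exact hv0desc x h
      -- the junction index
      set P0 : ℕ → Prop := fun j => ∃ x, cc.get? j = some x ∧ x ∈ p.nodes.drop i0
        with hP0def
      have hP00 : P0 0 := by
        have hd0 : (p.nodes.drop i0).get? 0 = some v0 := by
          rw [List.get?_drop]; simpa using hv0get
        exact ⟨v0, hcc0, List.get?_mem hd0⟩
      set m := Nat.findGreatest P0 (cc.length - 1) with hmdef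
      have hPm : P0 m := Nat.findGreatest_spec (Nat.zero_le _) hP00
      obtain ⟨cm, hcmget, hcmmem⟩ := hPm
      have hmlt : m < cc.length := (List.get?_eq_some.mp hcmget).1
      have hmax : ∀ jx x, m < jx → cc.get? jx = some x → x ∉ p.nodes.drop i0 := by
        intro jx x hjx hget hmem
        have hjlt : jx < cc.length := (List.get?_eq_some.mp hget).1
        exact Nat.findGreatest_is_greatest hjx (by omega) ⟨x, hget, hmem⟩
      obtain ⟨k1, hk1⟩ := List.mem_iff_get?.mp hcmmem
      rw [List.get?_drop] at hk1
      set i1 := i0 + k1 with hi1def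
      have hi1get : p.nodes.get? i1 = some cm := hk1
      have hi1lt : i1 < p.nodes.length := (List.get?_eq_some.mp hi1get).1
      have hi1ge : i0 ≤ i1 := Nat.le_add_right _ _
      -- the new node list
      set A := (cc.drop (m+1)).reverse with hAdef
      set B := p.nodes.drop i1 with hBdef
      set r := A.length with hrdef
      have hrval : r = cc.length - (m+1) := by
        rw [hrdef, hAdef, List.length_reverse, List.length_drop]
      have hBlen : B.length = p.nodes.length - i1 := by rw [hBdef, List.length_drop]
      have hBlen0 : 0 < B.length := by omega
      have hBne : B ≠ [] := List.ne_nil_of_length_pos hBlen0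
      have hB0 : B.get? 0 = some cm := by
        rw [hBdef, List.get?_drop]; simpa using hi1get
      set N := t :: (A ++ B) with hNdef
      have hNlen : N.length = 1 + r + B.length := by
        rw [hNdef]; simp only [List.length_cons, List.length_append]; omega
      have hNA : ∀ s, 1 ≤ s → s ≤ r → N.get? s = cc.get? (cc.length - s) := by
        intro s h1 h2
        obtain ⟨s', rfl⟩ : ∃ s', s = s' + 1 := ⟨s - 1, by omega⟩
        rw [hNdef, List.get?_cons_succ,
          List.get?_append (show s' < A.length by omega)]
        rw [hAdef, List.get?_reverse (by
          rw [List.length_drop]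
          have := hrval; omega)]
        rw [List.get?_drop]
        congr 1
        rw [List.length_drop]
        omega
      have hNB : ∀ j, N.get? (r + 1 + j) = p.nodes.get? (i1 + j) := by
        intro j
        have he : r + 1 + j = (r + j) + 1 := by omega
        rw [hNdef, he, List.get?_cons_succ,
          List.get?_append_right (show A.length ≤ r + j by omega)]
        have he2 : r + j - A.length = j := by omega
        rw [he2, hBdef, List.get?_drop]
      -- nodup
      have hAidx : ∀ x ∈ A, ∃ jx, m < jx ∧ cc.get? jx = some x := by
        intro x hx
        rw [hAdef, List.mem_reverse] at hx
        obtain ⟨k, hk⟩ := List.mem_iff_get?.mp hx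
        rw [List.get?_drop] at hk
        exact ⟨m + 1 + k, by omega, hk⟩
      have hAcc : ∀ x ∈ A, x ∈ cc := by
        intro x hx
        obtain ⟨jx, _, hj⟩ := hAidx x hx
        exact List.get?_mem hj
      have hBsub : ∀ x ∈ B, x ∈ p.nodes.drop i0 := by
        intro x hx
        have : B = (p.nodes.drop i0).drop k1 := by
          rw [hBdef, List.drop_drop]
        rw [this] at hx
        exact (List.drop_sublist _ _).subset hx
      have hdisjAB : ∀ x ∈ A, x ∉ B := by
        intro x hx hxB
        obtain ⟨jx, hjx, hjget⟩ := hAidx x hx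
        exact hmax jx x hjx hjget (hBsub x hxB)
      have htA : t ∉ A := fun h => htcc (hAcc _ h)
      have htB : t ∉ B := by
        intro h
        obtain ⟨k, hk⟩ := List.mem_iff_get?.mp h
        rw [hBdef, List.get?_drop] at hk
        have h0 : p.nodes.get? 0 = some t := (List.get?_zero p.nodes).trans p.head_eq
        have hlt : i1 + k < p.nodes.length := (List.get?_eq_some.mp hk).1
        have := List.get?_inj hlt p.nodup (hk.trans h0.symm)
        omega
      have hAnd : A.Nodup := by
        rw [hAdef]
        exact List.nodup_reverse.mpr (List.Nodup.sublist (List.drop_sublist _ _) hccnd)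
      have hBnd : B.Nodup := by
        rw [hBdef]
        exact List.Nodup.sublist (List.drop_sublist _ _) p.nodup
      have hNnd : N.Nodup := by
        rw [hNdef, List.nodup_cons, List.nodup_append]
        refine ⟨fun h => ?_, hAnd, hBnd, fun a ha b hb hab => hdisjAB a ha (hab ▸ hb)⟩
        rcases List.mem_append.mp h with h | h
        · exact htA h
        · exact htB h
      -- chain
      have hdropm1_last : ∀ x ∈ (cc.drop (m+1)).getLast?, E x t := by
        intro x hx
        rw [List.getLast?_drop] at hx
        by_cases hc : cc.length ≤ m + 1
        · rw [if_pos hc] at hx; simp at hx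
        · rw [if_neg hc] at hx; exact hcclastE' x hx
      have hchainA : (cc.drop (m+1) ++ [t]).Chain' E := by
        rw [List.Chain', List.isChain_append]
        exact ⟨hccchain.drop _, List.isChain_singleton _, fun x hx u hu => by
          simp at hu; subst hu; exact hdropm1_last x hx⟩
      have htAeq : t :: A = (cc.drop (m+1) ++ [t]).reverse := by
        rw [List.reverse_append]; simp [hAdef]
      have hchain_tA : (t :: A).Chain' (Adj E) := by
        rw [htAeq, List.Chain', List.isChain_reverse]
        exact hchainA.imp (fun a b h => Or.inr h)
      have hccm_get : cc.getLast? = cc.get? (cc.length - 1) := List.getLast?_eq_get? cc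
      have hgetlast_tA : ∀ x ∈ (t :: A).getLast?, Adj E x cm := by
        intro x hx
        by_cases hAe : A = []
        · rw [hAe] at hx; simp at hx; subst hx
          have hm' : m = cc.length - 1 := by
            have : r = 0 := by rw [hrdef, hAe]; rfl
            omega
          have : cc.get? m = some cm := hcmget
          rw [hm', ← hccm_get] at this
          exact Or.inr (hcclastE' cm this)
        · obtain ⟨a0, A', hA'⟩ := List.exists_cons_of_ne_nil hAe
          have hgl : (t :: A).getLast? = A.getLast? := by
            rw [hA', List.getLast?_cons_cons]
          rw [hgl, hAdef, List.getLast?_reverse, ← List.get?_zero, List.get?_drop] at hx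
          have hx' : cc.get? (m + 1) = some x := by simpa using hx
          exact Or.inr (chain'_get? hccchain hcmget hx')
      have hchainN : N.Chain' (Adj E) := by
        have hNsplit : N = (t :: A) ++ B := by rw [hNdef]; rfl
        rw [hNsplit, List.Chain', List.isChain_append]
        refine ⟨hchain_tA, ?_, fun x hx u hu => ?_⟩
        · rw [hBdef]; exact p.chain.drop _
        · rw [← List.get?_zero, hB0] at hu
          simp at hu; subst hu
          exact hgetlast_tA x hx
      have hNlast : N.getLast? = some y := by
        have h1 : B.getLast? = some y := by
          rw [hBdef, List.getLast?_drop, if_neg (not_le.mpr hi1lt)]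
          exact p.last_eq
        have hNsplit : N = (t :: A) ++ B := by rw [hNdef]; rfl
        rw [hNsplit, List.getLast?_append, h1]; rfl
      set pnew : GPath E t y := ⟨N, hNnd, by omega, by rw [hNdef]; rfl, hNlast, hchainN⟩
        with hpnew
      have hpnodes : pnew.nodes = N := rfl
      -- IntoFirst
      obtain ⟨g, hgget⟩ : ∃ g, cc.getLast? = some g :=
        ⟨cc.getLast hccne, List.getLast?_eq_getLast hccne⟩
      have hgE : E g t := hcclastE' g (by rw [hgget]; rfl)
      have hIFnew : pnew.IntoFirst := by
        refine ⟨g, ?_, hgE⟩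
        show N.get? 1 = some g
        by_cases hr0 : 1 ≤ r
        · rw [hNA 1 le_rfl hr0, ← hccm_get]; exact hgget
        · have hr' : r = 0 := by omega
          have h1 : N.get? 1 = p.nodes.get? i1 := by simpa [hr'] using hNB 0
          rw [h1, hi1get]
          have hm' : m = cc.length - 1 := by omega
          rw [hm', ← hccm_get, hgget] at hcmget
          exact hcmget.symm
      -- region 1: left edges point away
      have hBtail : cm :: B.tail = B := List.cons_head?_tail (by
        rw [← List.get?_zero]; exact hB0)
      have hNpre : N = ((t :: A) ++ [cm]) ++ B.tail := by
        rw [hNdef, ← hBtail]; simp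
      have hPreLen : ((t :: A) ++ [cm]).length = r + 2 := by simp [hrdef]
      have hPreChain : ((t :: A) ++ [cm]).Chain' (flip E) := by
        have hccdropm : cc.drop m = cm :: cc.drop (m + 1) := by
          rw [List.drop_eq_getElem_cons hmlt]
          obtain ⟨hlt, hget⟩ := List.get?_eq_some.mp hcmget
          rw [hget]
        have h1 : (cc.drop m ++ [t]).Chain' E := by
          rw [List.Chain', List.isChain_append]
          refine ⟨hccchain.drop _, List.isChain_singleton _, fun x hx u hu => ?_⟩
          simp at hu; subst hu
          rw [List.getLast?_drop, if_neg (not_le.mpr hmlt)] at hx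
          exact hcclastE' x hx
        have h2 : ((t :: A) ++ [cm]) = (cc.drop m ++ [t]).reverse := by
          rw [hccdropm, List.reverse_append]
          simp [hAdef]
        rw [h2, List.Chain', List.isChain_reverse]
        exact h1
      have hPre : ∀ s x u, s ≤ r → N.get? s = some x → N.get? (s + 1) = some u →
          E u x := by
        intro s x u hs hx hu
        have hxP : ((t :: A) ++ [cm]).get? s = some x := by
          rw [← List.get?_append (show s < ((t :: A) ++ [cm]).length by omega)]
          rw [← hNpre]; exact hx
        have huP : ((t :: A) ++ [cm]).get? (s + 1) = some u := by
          rw [← List.get?_append (show s + 1 < ((t :: A) ++ [cm]).length by omega)]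
          rw [← hNpre]; exact hu
        exact chain'_get? hPreChain hxP huP
      have hreg1_nc : ∀ s, 1 ≤ s → s ≤ r + 1 → ¬ ColL E N s := by
        rintro s h1 h2 ⟨x, v, z, e1, e2, e3, hx, hz⟩
        have hvx : E v x := hPre (s - 1) x v (by omega) e1 (by
          rw [show s - 1 + 1 = s by omega]; exact e2)
        exact hAc x ((Relation.TransGen.single hx).tail hvx)
      have hreg1_mem : ∀ s v, 1 ≤ s → s ≤ r + 1 → N.get? s = some v → v ∈ cc := by
        intro s v h1 h2 hv
        by_cases hs : s ≤ r
        · rw [hNA s h1 hs] at hv; exact List.get?_mem hv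
        · have hs' : s = r + 1 := by omega
          have h1 : N.get? (r + 1) = p.nodes.get? i1 := by simpa using hNB 0
          rw [hs', h1, hi1get] at hv
          have hvcm : v = cm := by injection hv.symm
          rw [hvcm]; exact List.get?_mem hcmget
      -- goodness of the new path
      have hGoodN : GoodP E t Z N := by
        intro s v hs0 hs1 hgets
        by_cases hreg : s ≤ r + 1
        · exact ⟨fun _ => hccZ v (hreg1_mem s v hs0 hreg hgets),
            fun hc => absurd hc (hreg1_nc s hs0 hreg)⟩
        · push_neg at hreg
          set j := s - r - 1 with hjdef
          have hj1 : 1 ≤ j := by omega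
          have hs_eq : s = r + 1 + j := by omega
          have e2 : N.get? s = p.nodes.get? (i1 + j) := by rw [hs_eq]; exact hNB j
          have e1 : N.get? (s - 1) = p.nodes.get? (i1 + j - 1) := by
            have := hNB (j - 1)
            rw [show r + 1 + (j - 1) = s - 1 by omega,
              show i1 + (j - 1) = i1 + j - 1 by omega] at this
            exact this
          have e3 : N.get? (s + 1) = p.nodes.get? (i1 + j + 1) := by
            have := hNB (j + 1)
            rw [show r + 1 + (j + 1) = s + 1 by omega] at this
            exact this
          have hciff : ColL E N s ↔ ColL E p.nodes (i1 + j) := by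
            refine colL_iff_of_eq ?_ e2 ?_
            · rw [show i1 + j - 1 = (i1 + j) - 1 from rfl] at e1; exact e1
            · exact e3
          have hint : (i1 + j) + 1 < p.nodes.length := by
            rw [hNlen] at hs1; omega
          have hPget : p.nodes.get? (i1 + j) = some v := by rw [← e2]; exact hgets
          have hg := hG (i1 + j) v (by omega) hint hPget
          exact ⟨fun hnc => hg.1 (fun hcP => hnc (hciff.mpr hcP)),
            fun hc => hg.2 (hciff.mp hc)⟩
      -- measure bound for the new path
      have hBoundN : ∀ s, BadP E Z N s → N.length ≤ s + n := by
        rintro s ⟨v, hgets, hs0, hs1, hcolN, hvZ, hdZ⟩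
        by_cases hreg : s ≤ r + 1
        · exact absurd hcolN (hreg1_nc s hs0 hreg)
        · push_neg at hreg
          have h1 := hB i0 ⟨v0, hv0get, hi00, hi01, hcol, hv0Z, hv0desc⟩
          rw [hNlen] at hs1 ⊢
          omega
      exact ih pnew hIFnew hGoodN hBoundN
  exact key p.nodes.length p hIF hG (fun i _ => by omega)

end CausalDAG

open CausalDAG in
/-- equivalence, Corollary 1: `Z` satisfies the back-door criterion
iff `e` and `y` are d-separated by `Z ∪ {t}` in the sub-sampled graph. -/
theorem stmt2 {V : Type*} [Finite V] (M : SemiMarkov V)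
    (hA1 : Assumption1 M)
    (xt : V) (hxt : xt ∈ M.Xo) (hedge : M.E xt M.t)
    (V0 : Set V) (hV0 : V0 ⊆ ({M.t} : Set V))
    (Z : Set V) (hZ : Z ⊆ M.Xo \ {xt}) :
    BackDoor M.E M.t M.y Z ↔
      DSep (subEdge M.E xt V0) (none : Option V) (some M.y)
        (some '' (Z ∪ {M.t})) := by
  classical
  set E := M.E with hE
  set t := M.t with ht
  set yy := M.y with hy
  set E' := subEdge M.E xt V0 with hE'
  have htXo : M.t ∉ M.Xo := fun h => M.t_notin (Or.inl h)
  have hyXo : M.y ∉ M.Xo := fun h => M.y_notin (Or.inl h)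
  have hxtt : xt ≠ M.t := fun h => htXo (h ▸ hxt)
  have hxty : xt ≠ M.y := fun h => hyXo (h ▸ hxt)
  have hxtZ : xt ∉ Z := fun h => (hZ h).2 rfl
  have htZ : M.t ∉ Z := fun h => htXo (hZ h).1
  have hyZ : M.y ∉ Z := fun h => hyXo (hZ h).1
  have hty : M.t ≠ M.y := M.t_ne_y
  have hdesc_t : ∀ d, Descendant M.E M.t d → d = M.y := by
    intro d h
    induction h with
    | single h => exact hA1.2.1 _ h
    | tail _ h ih => exact absurd (ih ▸ h) (hA1.2.2 _)
  have hbd1 : ∀ z ∈ Z, ¬ Descendant M.E M.t z := by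
    intro z hz hd
    have hzy := hdesc_t z hd
    rw [hzy] at hz
    exact hyZ hz
  have hSsome : ∀ v : V, (some v ∈ (some '' (Z ∪ {M.t}) : Set (Option V))) ↔
      (v ∈ Z ∨ v = M.t) := by
    intro v
    constructor
    · rintro ⟨x, hx, he⟩
      cases Option.some.inj he
      exact (by simpa using hx : _ ∨ _).symm
    · intro h
      exact ⟨v, by simpa using h.symm, rfl⟩
  have hSnone : (none : Option V) ∉ (some '' (Z ∪ {M.t}) : Set (Option V)) := by
    simp [Set.mem_image]
  have hadj_lift : ∀ a b : V, Adj M.E a b → Adj E' (some a) (some b) := by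
    rintro a b (h | h)
    · exact Or.inl h
    · exact Or.inr h
  have hP0 : ∀ (p : GPath M.E M.t M.y), p.nodes.get? 0 = some M.t :=
    fun p => (List.get?_zero p.nodes).trans p.head_eq
  constructor
  · -- BackDoor → DSep
    rintro ⟨hb1, hb2⟩ q
    by_contra hq
    have hq0 : q.nodes.get? 0 = some none := (List.get?_zero _).trans q.head_eq
    have hqtail : (none : Option V) ∉ q.nodes.tail := by
      have hnd := q.nodup
      rw [← List.cons_head?_tail q.head_eq, List.nodup_cons] at hnd
      exact hnd.1
    obtain ⟨l, hleq⟩ := exists_map_some hqtail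
    have hqeq : q.nodes = none :: l.map some := by
      rw [← List.cons_head?_tail q.head_eq, hleq]
    have hllen : q.nodes.length = l.length + 1 := by rw [hqeq]; simp
    have hlne : l ≠ [] := by
      intro h
      have h2 := q.two_le
      rw [hllen, h] at h2
      simp at h2
    have hllast : l.getLast? = some M.y := by
      have hl := q.last_eq
      rw [hqeq, getLast?_cons_ne (by simp [hlne]), getLast?_map'] at hl
      obtain ⟨a, ha, he⟩ := Option.map_eq_some_iff.mp hl
      rw [ha, Option.some.inj he]
    have hlchain : l.Chain' (Adj M.E) := by
      have hc := q.chain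
      rw [hqeq] at hc
      refine ((List.isChain_map some).mp (List.isChain_cons.mp hc).2).imp ?_
      rintro a b (h | h)
      · exact Or.inl h
      · exact Or.inr h
    have hlnd : l.Nodup := by
      have hnd := q.nodup
      rw [hqeq, List.nodup_cons] at hnd
      exact hnd.2.of_map
    have hql : ∀ k, q.nodes.get? (k + 1) = (l.get? k).map some := by
      intro k
      rw [hqeq]
      show (l.map some).get? k = _
      exact List.get?_map some l k
    obtain ⟨v1, hv1⟩ : ∃ v1, l.get? 0 = some v1 := by
      cases l with
      | nil => exact absurd rfl hlne
      | cons a tl => exact ⟨a, rfl⟩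
    have hv1adj : Adj (subEdge M.E xt V0) none (some v1) := by
      refine chain'_get? q.chain hq0 ?_
      rw [hql 0, hv1]
      rfl
    have hv1cases : v1 = xt ∨ v1 = M.t := by
      rcases hv1adj with h | h
      · exact h.elim
      · rcases h with h | h
        · exact Or.inl h
        · exact Or.inr (hV0 h)
    have hncol1 : ¬ q.ColliderAt 1 := by
      rintro ⟨x, v', z, e1, _, _, hx, _⟩
      have hxn : x = none := (Option.some.inj (hq0.symm.trans e1)).symm
      subst hxn
      exact hx
    -- unblockedness transferred to positions of l
    have hubL : ∀ k v, 0 < k → k + 1 < l.length → l.get? k = some v →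
        (¬ ColL M.E l k → (v ∉ Z ∧ v ≠ M.t)) ∧
        (ColL M.E l k → v ∈ Z ∨ v = M.t ∨
          ∃ d, Descendant M.E v d ∧ (d ∈ Z ∨ d = M.t)) := by
      intro k v hk0 hk1 hget
      have hint : q.Interior (k + 1) := ⟨by omega, by rw [hllen]; omega⟩
      have hgetq : q.nodes.get? (k + 1) = some (some v) := by
        rw [hql k, hget]; rfl
      have hciff : q.ColliderAt (k + 1) ↔ ColL M.E l k := by
        refine colL_subEdge_iff ?_ (hql k) (hql (k + 1))
        rw [show k + 1 - 1 = (k - 1) + 1 by omega, hql (k - 1)]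
      constructor
      · intro hnc
        constructor
        · intro hvZ
          exact hq ⟨k + 1, some v, hint, hgetq,
            Or.inl ⟨fun hcq => hnc (hciff.mp hcq), (hSsome v).mpr (Or.inl hvZ)⟩⟩
        · intro hvt
          exact hq ⟨k + 1, some v, hint, hgetq,
            Or.inl ⟨fun hcq => hnc (hciff.mp hcq), (hSsome v).mpr (Or.inr hvt)⟩⟩
      · intro hc
        by_contra hcon
        push_neg at hcon
        obtain ⟨h1, h2, h3⟩ := hcon
        refine hq ⟨k + 1, some v, hint, hgetq, Or.inr ⟨hciff.mpr hc, ?_, ?_⟩⟩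
        · intro hmem
          rcases (hSsome v).mp hmem with h | h
          · exact h1 h
          · exact h2 h
        · intro d' hd' hd'mem
          obtain ⟨d, hdZt, rfl⟩ := hd'mem
          have hdd : Descendant M.E v d := desc_proj hd'
          rcases (Set.mem_union _ _ _).mp hdZt with h | h'
          case inr =>
            have h : d = M.t := by simpa using h'
            exact (h3 d hdd).2 h
          case inl =>
            exact (h3 d hdd).1 h
    rcases hv1cases with hv1xt | hv1t
    case inr =>
      -- the first node after e is t : immediate contradiction
      rw [hv1t] at hv1
      have hllen2 : 2 ≤ l.length := by
        by_contra hcon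
        push_neg at hcon
        have h1 : l.length = 1 := by
          have := List.length_pos_iff.mpr hlne
          omega
        have hl := hllast
        rw [List.getLast?_eq_get?, h1] at hl
        exact hty (Option.some.inj (hv1.symm.trans hl))
      exact hq ⟨1, some M.t, ⟨one_pos, by rw [hllen]; omega⟩,
        by show q.nodes.get? (0 + 1) = _; rw [hql 0, hv1]; rfl,
        Or.inl ⟨hncol1, (hSsome M.t).mpr (Or.inr rfl)⟩⟩
    case inl =>
      rw [hv1xt] at hv1
      by_cases htl : M.t ∈ l
      case neg =>
        -- prepend t to l
        have hpnd : (M.t :: l).Nodup := List.nodup_cons.mpr ⟨htl, hlnd⟩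
        have hplast : (M.t :: l).getLast? = some M.y := by
          rw [getLast?_cons_ne hlne]; exact hllast
        have hpchain : (M.t :: l).Chain' (Adj M.E) := by
          refine List.isChain_cons.mpr ⟨?_, hlchain⟩
          intro b hb
          rw [← List.get?_zero, hv1] at hb
          have hb' : b = xt := by simpa using hb.symm
          subst hb'
          exact Or.inr hedge
        have hllen1 : 1 ≤ l.length := by
          have := List.length_pos_iff.mpr hlne; omega
        set p : GPath M.E M.t M.y := ⟨M.t :: l, hpnd, by simp; omega, rfl, hplast, hpchain⟩
          with hpdef
        have hpn : p.nodes = M.t :: l := rfl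
        have hIF : p.IntoFirst := ⟨xt, hv1, hedge⟩
        have hGood : GoodP M.E M.t Z p.nodes := by
          intro i v hi0 hi1 hget
          rw [hpn] at hget hi1
          simp only [List.length_cons] at hi1
          obtain ⟨k, rfl⟩ : ∃ k, i = k + 1 := ⟨i - 1, by omega⟩
          have hgl : l.get? k = some v := hget
          rcases Nat.eq_zero_or_pos k with rfl | hk0
          · -- the node xt
            have hvxt : v = xt := (Option.some.inj (hv1.symm.trans hgl)).symm
            refine ⟨fun _ => by rw [hvxt]; exact hxtZ, fun hc => ?_⟩
            exfalso
            obtain ⟨x, v', z, e1, e2, e3, hx, hz⟩ := hc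
            have hxn : x = M.t :=
              (Option.some.inj ((show p.nodes.get? 0 = some M.t from rfl).symm.trans e1)).symm
            have hv'xt : v' = xt :=
              (Option.some.inj ((show p.nodes.get? 1 = some xt from hv1).symm.trans e2)).symm
            rw [hxn, hv'xt] at hx
            exact hxty (hA1.2.1 _ hx)
          · have hkint : k + 1 < l.length := by omega
            have hvmem : v ∈ l := List.get?_mem hgl
            have hvnet : v ≠ M.t := fun h => htl (h ▸ hvmem)
            have hciff : ColL M.E p.nodes (k + 1) ↔ ColL M.E l k := by
              refine colL_iff_of_eq ?_ rfl rfl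
              simp only [hpn, show k + 1 - 1 = (k - 1) + 1 by omega,
                List.get?_cons_succ]
            have hub := hubL k v hk0 hkint hgl
            refine ⟨fun hnc => (hub.1 (fun hcl => hnc (hciff.mpr hcl))).1,
              fun hc => ?_⟩
            rcases hub.2 (hciff.mp hc) with h | h | ⟨d, hd1, hd2⟩
            · exact Or.inl h
            · exact absurd h hvnet
            · exact Or.inr ⟨d, hd1, hd2⟩
        obtain ⟨p'', hIF'', hub''⟩ := lemmaA M.acyclic p hIF hGood
        exact hub'' (hb2 p'' hIF'')
      case pos =>
        obtain ⟨j, hjget⟩ := List.mem_iff_get?.mp htl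
        have hjlt : j < l.length := (List.get?_eq_some.mp hjget).1
        have hj0 : 0 < j := by
          rcases Nat.eq_zero_or_pos j with rfl | h
          · exact absurd (Option.some.inj (hv1.symm.trans hjget)) hxtt
          · exact h
        have hj1 : j + 1 < l.length := by
          rcases Nat.lt_or_ge (j + 1) l.length with h | h
          · exact h
          · exfalso
            have hj' : j = l.length - 1 := by omega
            have hl := hllast
            rw [List.getLast?_eq_get?, ← hj'] at hl
            exact hty (Option.some.inj (hjget.symm.trans hl))
        -- t is a collider on q
        have hgetq : q.nodes.get? (j + 1) = some (some M.t) := by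
          rw [hql j, hjget]; rfl
        have hcolq : q.ColliderAt (j + 1) := by
          by_contra hnc
          exact hq ⟨j + 1, some M.t, ⟨by omega, by rw [hllen]; omega⟩, hgetq,
            Or.inl ⟨hnc, (hSsome M.t).mpr (Or.inr rfl)⟩⟩
        have hcoll : ColL M.E l j := by
          have hciff : q.ColliderAt (j + 1) ↔ ColL M.E l j := by
            refine colL_subEdge_iff ?_ (hql j) (hql (j + 1))
            rw [show j + 1 - 1 = (j - 1) + 1 by omega, hql (j - 1)]
          exact hciff.mp hcolq
        obtain ⟨x, v', z, e1, e2, e3, hx, hz⟩ := hcoll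
        have hv't : v' = M.t := Option.some.inj (e2.symm.trans hjget)
        subst hv't
        -- the suffix path from t
        have hdlen : (l.drop j).length = l.length - j := List.length_drop
        have hphead : (l.drop j).head? = some M.t := by
          rw [← List.get?_zero, List.get?_drop]
          simpa using hjget
        have hplast : (l.drop j).getLast? = some M.y := by
          rw [List.getLast?_drop, if_neg (not_le.mpr hjlt)]
          exact hllast
        set p : GPath M.E M.t M.y := ⟨l.drop j,
          List.Nodup.sublist (List.drop_sublist _ _) hlnd,
          by omega, hphead, hplast, hlchain.drop j⟩ with hpdef
        have hpn : p.nodes = l.drop j := rfl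
        have hIF : p.IntoFirst := by
          refine ⟨z, ?_, hz⟩
          rw [hpn, List.getElem?_drop]
          exact e3
        have hGood : GoodP M.E M.t Z p.nodes := by
          intro i v hi0 hi1 hget
          rw [hpn] at hget hi1
          rw [hdlen] at hi1
          rw [List.get?_drop] at hget
          have hkint : (j + i) + 1 < l.length := by omega
          have hvnet : v ≠ M.t := by
            intro h
            subst h
            have hkl : j + i < l.length := by omega
            have := List.get?_inj hkl hlnd (hget.trans hjget.symm)
            omega
          have hciff : ColL M.E p.nodes i ↔ ColL M.E l (j + i) := by
            refine colL_iff_of_eq ?_ ?_ ?_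
            · rw [hpn, List.get?_drop, show j + (i - 1) = j + i - 1 by omega]
            · rw [hpn, List.get?_drop]
            · rw [hpn, List.get?_drop, show j + (i + 1) = j + i + 1 by omega]
          have hub := hubL (j + i) v (by omega) hkint hget
          refine ⟨fun hnc => (hub.1 (fun hcl => hnc (hciff.mpr hcl))).1,
            fun hc => ?_⟩
          rcases hub.2 (hciff.mp hc) with h | h | ⟨d, hd1, hd2⟩
          · exact Or.inl h
          · exact absurd h hvnet
          · exact Or.inr ⟨d, hd1, hd2⟩
        obtain ⟨p'', hIF'', hub''⟩ := lemmaA M.acyclic p hIF hGood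
        exact hub'' (hb2 p'' hIF'')
  · -- DSep → BackDoor
    intro hds
    refine ⟨hbd1, ?_⟩
    intro p hIF
    by_contra hp
    obtain ⟨w1, hw1get, hw1E⟩ := hIF
    have hp0 : p.nodes.get? 0 = some M.t := hP0 p
    by_cases hxtp : xt ∈ p.nodes
    case neg =>
      have hmapne : p.nodes.map some ≠ [] := by
        intro h
        have := congrArg List.length h
        have h2 := p.two_le
        simp at this
        rw [this] at h2
        simp at h2
      have hqnd : (none :: some xt :: p.nodes.map some).Nodup := by
        rw [List.nodup_cons, List.nodup_cons]
        refine ⟨by simp, by simpa using hxtp,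
          List.Nodup.map (fun a b h => Option.some.inj h) p.nodup⟩
      have hqlast : (none :: some xt :: p.nodes.map some).getLast? = some (some M.y) := by
        rw [getLast?_cons_ne (by simp), getLast?_cons_ne hmapne, getLast?_map', p.last_eq]
        rfl
      have hqchain : (none :: some xt :: p.nodes.map some).Chain'
          (Adj (subEdge M.E xt V0)) := by
        refine List.isChain_cons_cons.mpr ⟨Or.inr (Or.inl rfl), ?_⟩
        refine List.isChain_cons.mpr ⟨?_, (List.isChain_map some).mpr (p.chain.imp hadj_lift)⟩
        intro b hb
        rw [← List.get?_zero, List.get?_map, hp0] at hb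
        have hb' : b = some M.t := by simpa using hb.symm
        subst hb'
        exact Or.inl hedge
      set q : GPath (subEdge M.E xt V0) (none : Option V) (some M.y) :=
        ⟨none :: some xt :: p.nodes.map some, hqnd, by simp, rfl, hqlast, hqchain⟩ with hqdef
      have hqn : q.nodes = none :: some xt :: p.nodes.map some := rfl
      have hqlen : q.nodes.length = p.nodes.length + 2 := by rw [hqn]; simp
      have hq2 : ∀ k, q.nodes.get? (k + 2) = (p.nodes.get? k).map some := by
        intro k
        rw [hqn]
        show (p.nodes.map some).get? k = _
        exact List.get?_map some p.nodes k
      obtain ⟨i, wv, ⟨hi0, hi1⟩, hgeti, hcase⟩ := hds q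
      rcases Nat.lt_or_ge i 3 with hi3 | hi3
      · interval_cases i
        · have hwv : wv = some xt := by
            rw [hqn] at hgeti
            exact (Option.some.inj hgeti).symm
          subst hwv
          rcases hcase with ⟨hnc, hmem⟩ | ⟨hc, _, _⟩
          · rcases (hSsome xt).mp hmem with h | h
            · exact hxtZ h
            · exact hxtt h
          · obtain ⟨x, v', z, e1, _, _, hx, _⟩ := hc
            rw [hqn] at e1
            have hxn : x = none := (Option.some.inj e1).symm
            subst hxn
            exact hx
        · have hwv : wv = some M.t := by
            have h2 := hq2 0
            rw [hp0] at h2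
            change q.nodes.get? 2 = _ at hgeti
            rw [h2] at hgeti
            exact (Option.some.inj hgeti).symm
          subst hwv
          have hcol2 : q.ColliderAt 2 := by
            refine ⟨some xt, some M.t, some w1, by rw [hqn]; rfl, ?_, ?_, hedge, hw1E⟩
            · exact (hq2 0).trans (by rw [hp0]; rfl)
            · exact (hq2 1).trans (by rw [show p.nodes.get? 1 = some w1 from hw1get]; rfl)
          rcases hcase with ⟨hnc, _⟩ | ⟨_, hmem, _⟩
          · exact hnc hcol2
          · exact hmem ((hSsome M.t).mpr (Or.inr rfl))
      · set k := i - 2 with hkdef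
        have hik : i = k + 2 := by omega
        have hk0 : 0 < k := by omega
        obtain ⟨v, hvget, hwv⟩ : ∃ v, p.nodes.get? k = some v ∧ wv = some v := by
          have h2 := hq2 k
          rw [← hik] at h2
          change q.nodes.get? i = _ at hgeti
          rw [h2] at hgeti
          obtain ⟨v, hv, he⟩ := Option.map_eq_some_iff.mp hgeti
          exact ⟨v, hv, he.symm⟩
        subst hwv
        have hkint : k + 1 < p.nodes.length := by
          rw [hqlen] at hi1; omega
        have hciff : q.ColliderAt i ↔ ColL M.E p.nodes k := by
          refine colL_subEdge_iff ?_ ?_ ?_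
          · rw [show i - 1 = (k - 1) + 2 by omega]
            exact hq2 (k - 1)
          · rw [hik]; exact hq2 k
          · rw [show i + 1 = (k + 1) + 2 by omega]
            exact hq2 (k + 1)
        have hvnet : v ≠ M.t := by
          intro h
          subst h
          have hkl : k < p.nodes.length := by omega
          have := List.get?_inj hkl p.nodup (hvget.trans hp0.symm)
          omega
        rcases hcase with ⟨hnc, hmem⟩ | ⟨hc, hmem, hdall⟩
        · rcases (hSsome v).mp hmem with hvZ | h
          · exact hp ⟨k, v, ⟨hk0, hkint⟩, hvget,
              Or.inl ⟨fun hcp => hnc (hciff.mpr hcp), hvZ⟩⟩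
          · exact hvnet h
        · refine hp ⟨k, v, ⟨hk0, hkint⟩, hvget, Or.inr ⟨hciff.mp hc, ?_, ?_⟩⟩
          · intro hvZ
            exact hmem ((hSsome v).mpr (Or.inl hvZ))
          · intro d hd hdZ
            exact hdall (some d) (desc_lift hd) ((hSsome d).mpr (Or.inl hdZ))
    case pos =>
      obtain ⟨j, hjget⟩ := List.mem_iff_get?.mp hxtp
      have hjlt : j < p.nodes.length := (List.get?_eq_some.mp hjget).1
      have hj0 : 0 < j := by
        rcases Nat.eq_zero_or_pos j with rfl | h
        · exact absurd (Option.some.inj (hjget.symm.trans hp0)) hxtt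
        · exact h
      have hj1 : j + 1 < p.nodes.length := by
        rcases Nat.lt_or_ge (j + 1) p.nodes.length with h | h
        · exact h
        · exfalso
          have hj' : j = p.nodes.length - 1 := by omega
          have hl := p.last_eq
          rw [List.getLast?_eq_get?, ← hj'] at hl
          exact hxty (Option.some.inj (hjget.symm.trans hl))
      have hDne : (p.nodes.drop j).map some ≠ [] := by
        intro h
        have := congrArg List.length h
        simp at this
        omega
      have hqnd : (none :: (p.nodes.drop j).map some).Nodup := by
        rw [List.nodup_cons]
        refine ⟨?_, List.Nodup.map (fun a b h => Option.some.inj h)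
          (List.Nodup.sublist (List.drop_sublist _ _) p.nodup)⟩
        intro h
        obtain ⟨a, -, ha⟩ := List.mem_map.mp h
        exact Option.some_ne_none a ha
      have hqlast : (none :: (p.nodes.drop j).map some).getLast? = some (some M.y) := by
        rw [getLast?_cons_ne hDne, getLast?_map', List.getLast?_drop,
          if_neg (not_le.mpr hjlt), p.last_eq]
        rfl
      have hqchain : (none :: (p.nodes.drop j).map some).Chain'
          (Adj (subEdge M.E xt V0)) := by
        refine List.isChain_cons.mpr ⟨?_, (List.isChain_map some).mpr
          ((p.chain.drop j).imp hadj_lift)⟩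
        intro b hb
        rw [← List.get?_zero, List.get?_map, List.get?_drop] at hb
        simp only [Nat.add_zero] at hb
        rw [hjget] at hb
        have hb' : b = some xt := by simpa using hb.symm
        subst hb'
        exact Or.inr (Or.inl rfl)
      set q : GPath (subEdge M.E xt V0) (none : Option V) (some M.y) :=
        ⟨none :: (p.nodes.drop j).map some, hqnd, by
          have : (p.nodes.drop j).length = p.nodes.length - j := List.length_drop
          simp only [List.length_cons, List.length_map]
          omega, rfl, hqlast, hqchain⟩ with hqdef
      have hqn : q.nodes = none :: (p.nodes.drop j).map some := rfl
      have hqlen : q.nodes.length = (p.nodes.length - j) + 1 := by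
        rw [hqn]; simp
      have hq1 : ∀ k, q.nodes.get? (k + 1) = (p.nodes.get? (j + k)).map some := by
        intro k
        rw [hqn]
        show ((p.nodes.drop j).map some).get? k = _
        rw [List.get?_map, List.get?_drop]
      obtain ⟨i, wv, ⟨hi0, hi1⟩, hgeti, hcase⟩ := hds q
      rcases Nat.lt_or_ge i 2 with hi2 | hi2
      · have hieq : i = 1 := by omega
        subst hieq
        have hwv : wv = some xt := by
          have h2 := hq1 0
          simp only [Nat.add_zero] at h2
          rw [hjget] at h2
          change q.nodes.get? 1 = _ at hgeti
          rw [h2] at hgeti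
          exact (Option.some.inj hgeti).symm
        subst hwv
        rcases hcase with ⟨hnc, hmem⟩ | ⟨hc, _, _⟩
        · rcases (hSsome xt).mp hmem with h | h
          · exact hxtZ h
          · exact hxtt h
        · obtain ⟨x, v', z, e1, _, _, hx, _⟩ := hc
          rw [hqn] at e1
          have hxn : x = none := (Option.some.inj e1).symm
          subst hxn
          exact hx
      · set k := j + i - 1 with hkdef
        have hik : k = j + (i - 1) := by omega
        have hk0 : 0 < k := by omega
        obtain ⟨v, hvget, hwv⟩ : ∃ v, p.nodes.get? k = some v ∧ wv = some v := by
          have h2 := hq1 (i - 1)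
          rw [show i - 1 + 1 = i by omega, ← hik] at h2
          change q.nodes.get? i = _ at hgeti
          rw [h2] at hgeti
          obtain ⟨v, hv, he⟩ := Option.map_eq_some_iff.mp hgeti
          exact ⟨v, hv, he.symm⟩
        subst hwv
        have hkint : k + 1 < p.nodes.length := by
          rw [hqlen] at hi1
          omega
        have hciff : q.ColliderAt i ↔ ColL M.E p.nodes k := by
          refine colL_subEdge_iff ?_ ?_ ?_
          · have h2 := hq1 (i - 2)
            rw [show i - 2 + 1 = i - 1 by omega, show j + (i - 2) = k - 1 by omega] at h2
            exact h2
          · have h2 := hq1 (i - 1)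
            rw [show i - 1 + 1 = i by omega, ← hik] at h2
            exact h2
          · have h2 := hq1 i
            rw [show j + i = k + 1 by omega] at h2
            exact h2
        have hvnet : v ≠ M.t := by
          intro h
          subst h
          have hkl : k < p.nodes.length := by omega
          have := List.get?_inj hkl p.nodup (hvget.trans hp0.symm)
          omega
        rcases hcase with ⟨hnc, hmem⟩ | ⟨hc, hmem, hdall⟩
        · rcases (hSsome v).mp hmem with hvZ | h
          · exact hp ⟨k, v, ⟨hk0, hkint⟩, hvget,
              Or.inl ⟨fun hcp => hnc (hciff.mpr hcp), hvZ⟩⟩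
          · exact hvnet h
        · refine hp ⟨k, v, ⟨hk0, hkint⟩, hvget, Or.inr ⟨hciff.mp hc, ?_, ?_⟩⟩
          · intro hvZ
            exact hmem ((hSsome v).mpr (Or.inl hvZ))
          · intro d hd hdZ
            exact hdall (some d) (desc_lift hd) ((hSsome d).mpr (Or.inl hdZ))
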